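/- Suppose f is μ-strongly convex and L-smooth with minimizer x*. Let (x_k, y_k) be generated by the AOR-HB iteration (x_{k+1} − x_k)/α = y_k − x_{k+1}, (y_{k+1} − y_k)/α = x_{k+1} − y_{k+1} − (1/μ)(2∇f(x_{k+1}) − ∇f(x_k)) with step size α = √(μ/L). Then with E^α(x,y) = f(x) − f(x*) + (μ/2)‖y − x*‖² + α⟨∇f(x) − ∇f(x*), y − x*⟩, we have E^α(x_{k+1}, y_{k+1}) ≤ (1/(1 + α/2)) E^α(x_k, y_k) for all k ≥ 0. -/

import Mathlib

open scoped RealInnerProductSpace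

set_option maxHeartbeats 1000000

/-- One-step contraction of the modified Lyapunov function `E^α` along the
AOR-HB iteration with step size `α = √(μ/L)`. -/
theorem aorhb_lyapunov_contraction {d : ℕ}
    (f : EuclideanSpace ℝ (Fin d) → ℝ) (f' : EuclideanSpace ℝ (Fin d) → EuclideanSpace ℝ (Fin d))
    (μ L : ℝ) (hμ : 0 < μ) (hμL : μ ≤ L)
    (hf : ∀ x, HasGradientAt f (f' x) x)
    (hsc : ∀ x y, f y - f x - ⟪f' x, y - x⟫ ≥ μ / 2 * ‖x - y‖ ^ 2)
    (hsmooth : ∀ x y, ‖f' x - f' y‖ ≤ L * ‖x - y‖)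
    (xs : EuclideanSpace ℝ (Fin d)) (hmin : ∀ z, f xs ≤ f z) (hgrad0 : f' xs = 0)
    (α : ℝ) (hα : α = Real.sqrt (μ / L))
    (x y : ℕ → EuclideanSpace ℝ (Fin d))
    (hx : ∀ k, x (k + 1) - x k = α • (y k - x (k + 1)))
    (hy : ∀ k, y (k + 1) - y k =
      α • (x (k + 1) - y (k + 1) - μ⁻¹ • ((2 : ℝ) • f' (x (k + 1)) - f' (x k))))
    (Eα : ℕ → ℝ)
    (hEα : ∀ k, Eα k = f (x k) - f xs + μ / 2 * ‖y k - xs‖ ^ 2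
      + α * ⟪f' (x k) - f' xs, y k - xs⟫) :
    ∀ k, Eα (k + 1) ≤ (1 / (1 + α / 2)) * Eα k := by
  have hL : 0 < L := lt_of_lt_of_le hμ hμL
  -- basic facts about α
  have hαpos : 0 < α := by
    rw [hα]; exact Real.sqrt_pos.2 (div_pos hμ hL)
  have hα1 : α ≤ 1 := by
    rw [hα]
    rw [show (1:ℝ) = Real.sqrt 1 by simp]
    exact Real.sqrt_le_sqrt ((div_le_one hL).2 hμL)
  have hμeq : μ = α ^ 2 * L := by
    rw [hα, Real.sq_sqrt (le_of_lt (div_pos hμ hL))]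
    field_simp
  -- descent lemma
  have descent : ∀ u v, f v ≤ f u + ⟪f' u, v - u⟫ + L/2 * ‖v - u‖^2 := by
    intro u v
    set c : ℝ → EuclideanSpace ℝ (Fin d) := fun t => u + t • (v - u) with hc
    have hcd : ∀ t : ℝ, HasDerivAt c (v - u) t := by
      intro t
      have h := ((hasDerivAt_id t).smul_const (v - u)).const_add u
      rw [one_smul] at h
      exact h
    set φ : ℝ → ℝ := fun t => f (c t) - t * ⟪f' u, v - u⟫ - t^2 * (L/2 * ‖v - u‖^2) with hφ
    have hφd : ∀ t : ℝ, HasDerivAt φ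
        (⟪f' (c t), v - u⟫ - ⟪f' u, v - u⟫ - 2*t * (L/2 * ‖v - u‖^2)) t := by
      intro t
      have h1 : HasDerivAt (fun t => f (c t)) ⟪f' (c t), v - u⟫ t := by
        have := (hasGradientAt_iff_hasFDerivAt.1 (hf (c t))).comp_hasDerivAt t (hcd t)
        exact this
      have h2 : HasDerivAt (fun t : ℝ => t * ⟪f' u, v - u⟫) ⟪f' u, v - u⟫ t := by
        simpa using (hasDerivAt_id t).mul_const ⟪f' u, v - u⟫
      have h3 : HasDerivAt (fun t : ℝ => t^2 * (L/2 * ‖v - u‖^2)) (2*t * (L/2 * ‖v - u‖^2)) t := by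
        have := (hasDerivAt_pow 2 t).mul_const (L/2 * ‖v - u‖^2)
        simpa [mul_comm] using this
      exact (h1.sub h2).sub h3
    have hanti : AntitoneOn φ (Set.Icc 0 1) := by
      apply antitoneOn_of_deriv_nonpos (convex_Icc 0 1)
      · exact fun t _ => ((hφd t).continuousAt).continuousWithinAt
      · intro t ht
        exact ((hφd t).differentiableAt).differentiableWithinAt
      · intro t ht
        rw [interior_Icc] at ht
        rw [(hφd t).deriv]
        have hb : ⟪f' (c t) - f' u, v - u⟫ ≤ L * t * ‖v - u‖^2 := by
          calc ⟪f' (c t) - f' u, v - u⟫ ≤ ‖f' (c t) - f' u‖ * ‖v - u‖ := real_inner_le_norm _ _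
          _ ≤ (L * ‖c t - u‖) * ‖v - u‖ := by
              have := hsmooth (c t) u
              nlinarith [norm_nonneg (v - u)]
          _ = L * t * ‖v - u‖^2 := by
              have : c t - u = t • (v - u) := by simp [hc]
              rw [this, norm_smul]
              simp [abs_of_pos ht.1]
              ring
        have := inner_sub_left (𝕜 := ℝ) (f' (c t)) (f' u) (v - u)
        nlinarith [ht.1.le]
    have h01 : φ 1 ≤ φ 0 :=
      hanti (Set.mem_Icc.2 ⟨le_rfl, zero_le_one⟩) (Set.mem_Icc.2 ⟨zero_le_one, le_rfl⟩) zero_le_one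
    have hc0 : c 0 = u := by simp [hc]
    have hc1 : c 1 = v := by simp [hc]
    have e0 : φ 0 = f u := by
      simp only [hφ, hc0, zero_mul, sub_zero, ne_eq, OfNat.ofNat_ne_zero,
        not_false_eq_true, zero_pow, mul_zero]
    have e1 : φ 1 = f v - ⟪f' u, v - u⟫ - L/2 * ‖v - u‖^2 := by
      simp only [hφ, hc1, one_mul, one_pow]
    rw [e0, e1] at h01
    linarith
  -- convexity lower bound
  have hconv : ∀ u z, f u + ⟪f' u, z - u⟫ ≤ f z := by
    intro u z
    have h := hsc u z
    nlinarith [mul_nonneg hμ.le (sq_nonneg ‖u - z‖)]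
  -- cocoercivity (scaled by 2L)
  have coco : ∀ u v, 2*L*(f u + ⟪f' u, v - u⟫) + ‖f' v - f' u‖^2 ≤ 2*L*(f v) := by
    intro u v
    set Δ := f' v - f' u with hΔ
    have h1 := hconv u (v - L⁻¹ • Δ)
    have h2 := descent v (v - L⁻¹ • Δ)
    have e1 : v - L⁻¹ • Δ - u = (v - u) - L⁻¹ • Δ := by abel
    have e2 : v - L⁻¹ • Δ - v = -(L⁻¹ • Δ) := by abel
    rw [e1] at h1
    rw [e2] at h2
    rw [inner_sub_right, real_inner_smul_right] at h1
    rw [inner_neg_right, real_inner_smul_right, norm_neg, norm_smul] at h2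
    have e3 : (‖(L:ℝ)⁻¹‖ * ‖Δ‖)^2 = L⁻¹^2 * ‖Δ‖^2 := by
      rw [Real.norm_eq_abs, abs_of_pos (by positivity)]
      ring
    rw [e3] at h2
    have e4 : ⟪f' v, Δ⟫ - ⟪f' u, Δ⟫ = ‖Δ‖^2 := by
      rw [← real_inner_self_eq_norm_sq, hΔ, inner_sub_left]
    have hL' : L ≠ 0 := ne_of_gt hL
    have h3 : f u + (⟪f' u, v - u⟫ - L⁻¹ * ⟪f' u, Δ⟫) ≤
        f v + -(L⁻¹ * ⟪f' v, Δ⟫) + L/2 * (L⁻¹^2 * ‖Δ‖^2) := le_trans h1 h2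
    have h4 : L/2 * (L⁻¹^2 * ‖Δ‖^2) = 1/(2*L) * ‖Δ‖^2 := by field_simp
    have h5 : L⁻¹ * ⟪f' v, Δ⟫ - L⁻¹ * ⟪f' u, Δ⟫ = L⁻¹ * ‖Δ‖^2 := by
      rw [← mul_sub, e4]
    have h6 : f u + ⟪f' u, v - u⟫ + L⁻¹ * ‖Δ‖^2 - 1/(2*L) * ‖Δ‖^2 ≤ f v := by linarith
    have h7 : L⁻¹ * ‖Δ‖^2 - 1/(2*L) * ‖Δ‖^2 = 1/(2*L) * ‖Δ‖^2 := by field_simp; ring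
    have h8 : f u + ⟪f' u, v - u⟫ + 1/(2*L) * ‖Δ‖^2 ≤ f v := by linarith
    have h10 := mul_le_mul_of_nonneg_left h8 (by positivity : (0:ℝ) ≤ 2*L)
    have h11 : 2*L*(f u + ⟪f' u, v - u⟫ + 1/(2*L)*‖Δ‖^2)
        = 2*L*(f u + ⟪f' u, v - u⟫) + ‖Δ‖^2 := by field_simp
    linarith
  clear hmin hsmooth hf
  subst hμeq
  intro k
  -- names
  set p := x (k+1) with hp
  set X := x k with hX
  set q := y (k+1) with hq
  set Y := y k with hY
  set g1 := f' (x (k+1)) with hg1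
  set g0 := f' (x k) with hg0
  have hβ2 : (0:ℝ) < 3/2 - α/3 := by linarith
  have hβ3 : (0:ℝ) < 1/2 - α/3 := by linarith
  have h1α : (0:ℝ) ≤ 1 - α := by linarith
  -- the weighted ingredient inequalities
  have W1 : 0 ≤ 2*L*(f X - f p - ⟪g1, X - p⟫) - ‖g0 - g1‖^2 := by
    have := coco p X
    linarith
  have W2 : 0 ≤ (α*(3/2 - α/3)*L) *
      (f xs - f p - ⟪g1, xs - p⟫ - α^2*L/2 * ‖p - xs‖^2) := by
    apply mul_nonneg (by positivity)
    have := hsc p xs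
    linarith
  have W3 : 0 ≤ (α*(1/2 - α/3)*L) * (f p - f xs - α^2*L/2 * ‖p - xs‖^2) := by
    apply mul_nonneg (by positivity)
    have h := hsc xs p
    rw [hgrad0, inner_zero_left, norm_sub_rev] at h
    linarith
  have W4 : 0 ≤ (α*(1/2 - α/3)/2) *
      (2*L*(f xs - f p - ⟪g1, xs - p⟫) - ‖g1‖^2) := by
    apply mul_nonneg (by positivity)
    have h := coco p xs
    rw [hgrad0, zero_sub, norm_neg] at h
    linarith
  have W5 : 0 ≤ (α*(1/2 - α/3)/2) * (2*L*(f p - f xs) - ‖g1‖^2) := by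
    apply mul_nonneg (by positivity)
    have h := coco xs p
    rw [hgrad0, inner_zero_left, sub_zero] at h
    linarith
  -- the two recurrence equalities, contracted and prescaled
  have hyv : (2*α^2*L^2) • (q - Y) =
      (2*α^3*L^2) • (p - q) - (2*α*L) • ((2:ℝ) • g1 - g0) := by
    rw [hy k]
    match_scalars <;> (field_simp; try ring)
  have eHB := congrArg (fun v => ⟪v, q - xs⟫) hyv
  have eHX := congrArg (fun v => 2*L*⟪g1, v⟫) (hx k)
  -- nonnegative squares
  have WS1 : 0 ≤ ‖g1 - g0 - (α*L) • (Y - q)‖^2 := by positivity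
  have WS2 : 0 ≤ α/6 * ‖(3*α*L) • (q - xs) - g1 - (2*α*L) • (p - xs)‖^2 := by positivity
  have WL1 : 0 ≤ (α^3*(1-α)*L^2/3) * ‖p - xs‖^2 := by positivity
  have WL2 : 0 ≤ (α*(1-α)/3) * ‖g1‖^2 := by positivity
  -- main scaled inequality
  have key2 : 0 ≤ 2*L*(Eα k - (1 + α/2) * Eα (k+1)) := by
    rw [hEα k, hEα (k+1), hgrad0]
    simp only [← hp, ← hX, ← hq, ← hY, ← hg1, ← hg0, sub_zero]
    simp only [← real_inner_self_eq_norm_sq] at W1 W2 W3 W4 W5 WS1 WS2 WL1 WL2 eHB eHX ⊢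
    simp only [inner_sub_left, inner_sub_right, inner_add_left, inner_add_right,
      real_inner_smul_left, real_inner_smul_right, inner_neg_left, inner_neg_right,
      inner_zero_left, inner_zero_right,
      real_inner_comm] at W1 W2 W3 W4 W5 WS1 WS2 WL1 WL2 eHB eHX ⊢
    linarith [W1, W2, W3, W4, W5, WS1, WS2, WL1, WL2, eHB, eHX]
  have hpos : (0:ℝ) < 1 + α/2 := by linarith
  have key : (1 + α/2) * Eα (k+1) ≤ Eα k := by nlinarith [key2]
  rw [show (1:ℝ)/(1 + α/2) * Eα k = Eα k / (1 + α/2) by ring, le_div_iff₀ hpos]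
  linarith
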